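/- Assume c_j > 0 and l_j > 0 for all j and set q_j = l_j/c_j. (i) If x₀ ∈ P has all coordinates strictly positive and is a local maximum of f on P, then there exists β > 0 such that β·q_j < φ'(0) and x₀_j = ψ(β q_j) for every j, and ∑_{j=1}^n l_j ψ(β q_j) = b. (ii) Conversely, if β > 0 satisfies β·q_j < φ'(0) for all j and ∑_{j=1}^n l_j ψ(β q_j) = b, then the point x₀ with coordinates x₀_j = ψ(β q_j) is a local maximum of f on P. -/

import Mathlib

open scoped BigOperators

private lemma sum_split {n : ℕ} {i k : Fin n} (hik : i ≠ k) (h : Fin n → ℝ) :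
    ∑ j, h j = h i + (h k + ∑ j ∈ (Finset.univ.erase i).erase k, h j) := by
  rw [Finset.add_sum_erase _ h (Finset.mem_erase.2 ⟨Ne.symm hik, Finset.mem_univ k⟩),
    Finset.add_sum_erase _ h (Finset.mem_univ i)]

private lemma coord_le_norm {n : ℕ} (y : EuclideanSpace ℝ (Fin n)) (j : Fin n) :
    |y j| ≤ ‖y‖ := by
  have h1 : ‖y j‖ ^ 2 ≤ ∑ i, ‖y i‖ ^ 2 :=
    Finset.single_le_sum (f := fun i => ‖y i‖ ^ 2) (fun i _ => sq_nonneg _) (Finset.mem_univ j)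
  rw [Real.norm_eq_abs] at h1
  rw [EuclideanSpace.norm_eq]
  calc |y j| = Real.sqrt (|y j| ^ 2) := (Real.sqrt_sq (abs_nonneg _)).symm
    _ ≤ Real.sqrt (∑ i, ‖y i‖ ^ 2) := Real.sqrt_le_sqrt h1

private lemma tangent_le {φ : ℝ → ℝ} (hdiff : Differentiable ℝ φ)
    (hanti : StrictAntiOn (deriv φ) (Set.Ici 0))
    {a x : ℝ} (ha : 0 ≤ a) (hx : 0 ≤ x) :
    φ x ≤ φ a + deriv φ a * (x - a) := by
  rcases lt_trichotomy x a with h | h | h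
  · obtain ⟨ξ, hξ, hs⟩ := exists_hasDerivAt_eq_slope φ (deriv φ) h
      hdiff.continuous.continuousOn (fun y _ => (hdiff y).hasDerivAt)
    rw [eq_div_iff (sub_ne_zero.2 (ne_of_gt h))] at hs
    have hlt : deriv φ a < deriv φ ξ :=
      hanti (Set.mem_Ici.2 (le_of_lt (lt_of_le_of_lt hx hξ.1))) (Set.mem_Ici.2 ha) hξ.2
    nlinarith
  · simp [h]
  · obtain ⟨ξ, hξ, hs⟩ := exists_hasDerivAt_eq_slope φ (deriv φ) h
      hdiff.continuous.continuousOn (fun y _ => (hdiff y).hasDerivAt)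
    rw [eq_div_iff (sub_ne_zero.2 (ne_of_gt h))] at hs
    have hlt : deriv φ ξ < deriv φ a :=
      hanti (Set.mem_Ici.2 ha) (Set.mem_Ici.2 (le_of_lt (lt_of_le_of_lt ha hξ.1))) hξ.1
    nlinarith

/-- Under (A1), with `cⱼ > 0`, `lⱼ > 0` and `qⱼ = lⱼ/cⱼ`:
(i) every local maximum `x₀` of `f` on `P` with all coordinates strictly positive is of
the form `x₀ⱼ = ψ(β qⱼ)` for some `β > 0` with `β qⱼ < φ'(0)` and `∑ lⱼ ψ(β qⱼ) = b`;
(ii) conversely, any such `β` yields a local maximum `x₀` with `x₀ⱼ = ψ(β qⱼ)`. -/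
theorem stmt_4 (n : ℕ) (φ ψ : ℝ → ℝ)
    (hφC : ContDiff ℝ 2 φ)
    (hodd : ∀ x : ℝ, φ (-x) = -φ x)
    (hφ' : ∀ x : ℝ, 0 < deriv φ x)
    (hφ'' : ∀ x : ℝ, x ≠ 0 → x * deriv (deriv φ) x < 0)
    (hlim : ∃ L : ℝ, Filter.Tendsto φ Filter.atTop (nhds L))
    (hψ : ∀ y : ℝ, 0 < y → y ≤ deriv φ 0 → 0 ≤ ψ y ∧ deriv φ (ψ y) = y)
    (hψinv : ∀ x : ℝ, 0 ≤ x → ψ (deriv φ x) = x)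
    (c l q : Fin n → ℝ) (hc : ∀ j, 0 < c j) (hl : ∀ j, 0 < l j)
    (hq : ∀ j, q j = l j / c j) (b : ℝ)
    (f : EuclideanSpace ℝ (Fin n) → ℝ)
    (hf : ∀ x : EuclideanSpace ℝ (Fin n), f x = ∑ i, c i * φ (x i))
    (P : Set (EuclideanSpace ℝ (Fin n)))
    (hP : P = {x : EuclideanSpace ℝ (Fin n) | ∑ j, l j * x j = b}) :
    (∀ x₀ : EuclideanSpace ℝ (Fin n), x₀ ∈ P → (∀ j, 0 < x₀ j) →
      (∃ ε > 0, ∀ x ∈ P, ‖x - x₀‖ < ε → f x ≤ f x₀) →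
      ∃ β : ℝ, 0 < β ∧ (∀ j, β * q j < deriv φ 0 ∧ x₀ j = ψ (β * q j)) ∧
        (∑ j, l j * ψ (β * q j)) = b) ∧
    (∀ β : ℝ, 0 < β → (∀ j, β * q j < deriv φ 0) → (∑ j, l j * ψ (β * q j)) = b →
      ∀ x₀ : EuclideanSpace ℝ (Fin n), (∀ j, x₀ j = ψ (β * q j)) →
        x₀ ∈ P ∧ ∃ ε > 0, ∀ x ∈ P, ‖x - x₀‖ < ε → f x ≤ f x₀) := by
  have hdiff : Differentiable ℝ φ := hφC.differentiable (by norm_num)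
  have hanti : StrictAntiOn (deriv φ) (Set.Ici 0) := by
    apply strictAntiOn_of_deriv_neg (convex_Ici 0)
      (hφC.continuous_deriv one_le_two).continuousOn
    intro x hx
    rw [interior_Ici] at hx
    have h := hφ'' x (ne_of_gt hx)
    rw [Set.mem_Ioi] at hx
    nlinarith
  have hl0 : ∀ j, l j ≠ 0 := fun j => ne_of_gt (hl j)
  have hc0 : ∀ j, c j ≠ 0 := fun j => ne_of_gt (hc j)
  constructor
  · rintro x₀ hx₀P hpos ⟨ε, hε, hmax⟩
    rw [hP] at hx₀P
    have hx₀b : ∑ j, l j * x₀ j = b := hx₀P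
    rcases Nat.eq_zero_or_pos n with hn | hn
    · subst hn
      exact ⟨1, one_pos, fun j => j.elim0, by simpa using hx₀b⟩
    have key : ∀ i k : Fin n, i ≠ k →
        c i * deriv φ (x₀ i) / l i = c k * deriv φ (x₀ k) / l k := by
      intro i k hik
      set v : EuclideanSpace ℝ (Fin n) :=
        WithLp.toLp 2 (fun j => if j = i then (l i)⁻¹ else if j = k then -(l k)⁻¹ else 0) with hv
      have hvi : v i = (l i)⁻¹ := by simp [hv]
      have hvk : v k = -(l k)⁻¹ := by simp [hv, Ne.symm hik]
      have hvo : ∀ j, j ≠ i → j ≠ k → v j = 0 := by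
        intro j h1 h2; simp [hv, h1, h2]
      set g : ℝ → ℝ := fun t =>
        c i * φ (x₀ i + t * (l i)⁻¹) + c k * φ (x₀ k + t * (-(l k)⁻¹)) with hg
      have hvnorm : (0:ℝ) < ‖v‖ + 1 := by positivity
      have hloc : IsLocalMax g 0 := by
        rw [IsLocalMax, IsMaxFilter, Metric.eventually_nhds_iff]
        refine ⟨ε / (‖v‖ + 1), by positivity, ?_⟩
        intro t ht
        rw [Real.dist_eq, sub_zero] at ht
        set x : EuclideanSpace ℝ (Fin n) := x₀ + t • v with hx
        have hxj : ∀ j, x j = x₀ j + t * v j := fun j => rfl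
        have hxP : x ∈ P := by
          rw [hP]
          show ∑ j, l j * x j = b
          have hsplit : ∑ j, l j * x j = ∑ j, l j * x₀ j + ∑ j, l j * (t * v j) := by
            rw [← Finset.sum_add_distrib]
            exact Finset.sum_congr rfl (fun j _ => by rw [hxj]; ring)
          rw [hsplit, hx₀b]
          have hz : ∑ j, l j * (t * v j) = 0 := by
            rw [sum_split hik (fun j => l j * (t * v j)), hvi, hvk,
              Finset.sum_eq_zero (fun j hj => by
                rw [Finset.mem_erase, Finset.mem_erase] at hj
                rw [hvo j hj.2.1 hj.1]; ring)]
            field_simp [hl0 i, hl0 k]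
            ring
          rw [hz]; ring
        have hnear : ‖x - x₀‖ < ε := by
          have hxe : x - x₀ = t • v := by rw [hx]; abel
          rw [hxe, norm_smul, Real.norm_eq_abs]
          calc |t| * ‖v‖ ≤ |t| * (‖v‖ + 1) := by
                nlinarith [abs_nonneg t, norm_nonneg v]
            _ < ε / (‖v‖ + 1) * (‖v‖ + 1) := mul_lt_mul_of_pos_right ht hvnorm
            _ = ε := by field_simp
        have hfle := hmax x hxP hnear
        rw [hf, hf, sum_split hik (fun j => c j * φ (x j)),
          sum_split hik (fun j => c j * φ (x₀ j))] at hfle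
        have hrest : ∀ j ∈ (Finset.univ.erase i).erase k,
            c j * φ (x j) = c j * φ (x₀ j) := by
          intro j hj
          rw [Finset.mem_erase, Finset.mem_erase] at hj
          rw [hxj, hvo j hj.2.1 hj.1]
          norm_num
        rw [Finset.sum_congr rfl hrest] at hfle
        have hxi : x i = x₀ i + t * (l i)⁻¹ := by rw [hxj, hvi]
        have hxk : x k = x₀ k + t * (-(l k)⁻¹) := by rw [hxj, hvk]
        rw [hxi, hxk] at hfle
        show c i * φ (x₀ i + t * (l i)⁻¹) + c k * φ (x₀ k + t * (-(l k)⁻¹))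
          ≤ c i * φ (x₀ i + 0 * (l i)⁻¹) + c k * φ (x₀ k + 0 * (-(l k)⁻¹))
        simp only [zero_mul, add_zero]
        linarith
      have h1 : HasDerivAt (fun t : ℝ => x₀ i + t * (l i)⁻¹) ((l i)⁻¹) 0 :=
        (hasDerivAt_mul_const _).const_add _
      have h2 : HasDerivAt (fun t : ℝ => x₀ k + t * (-(l k)⁻¹)) (-(l k)⁻¹) 0 :=
        (hasDerivAt_mul_const _).const_add _
      have hφ1 : HasDerivAt (fun t : ℝ => φ (x₀ i + t * (l i)⁻¹))
          (deriv φ (x₀ i + 0 * (l i)⁻¹) * (l i)⁻¹) 0 :=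
        (hdiff _).hasDerivAt.comp 0 h1
      have hφ2 : HasDerivAt (fun t : ℝ => φ (x₀ k + t * (-(l k)⁻¹)))
          (deriv φ (x₀ k + 0 * (-(l k)⁻¹)) * (-(l k)⁻¹)) 0 :=
        (hdiff _).hasDerivAt.comp 0 h2
      have hgd : HasDerivAt g
          (c i * (deriv φ (x₀ i + 0 * (l i)⁻¹) * (l i)⁻¹)
            + c k * (deriv φ (x₀ k + 0 * (-(l k)⁻¹)) * (-(l k)⁻¹))) 0 :=
        (hφ1.const_mul _).add (hφ2.const_mul _)
      have hzero := hloc.deriv_eq_zero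
      rw [hgd.deriv] at hzero
      simp only [zero_mul, add_zero] at hzero
      rw [div_eq_div_iff (hl0 i) (hl0 k)]
      field_simp [hl0 i, hl0 k] at hzero
      linarith
    set i0 : Fin n := ⟨0, hn⟩ with hi0
    set β := c i0 * deriv φ (x₀ i0) / l i0 with hβ
    have hβpos : 0 < β := div_pos (mul_pos (hc i0) (hφ' _)) (hl i0)
    have hβq : ∀ j, β * q j = deriv φ (x₀ j) := by
      intro j
      rcases eq_or_ne i0 j with rfl | hij
      · rw [hβ, hq]
        rw [div_mul_div_comm, div_eq_iff (mul_ne_zero (hl0 _) (hc0 _))]; ring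
      · rw [hβ, key i0 j hij, hq]
        rw [div_mul_div_comm, div_eq_iff (mul_ne_zero (hl0 _) (hc0 _))]; ring
    refine ⟨β, hβpos, fun j => ⟨?_, ?_⟩, ?_⟩
    · rw [hβq j]
      exact hanti (Set.mem_Ici.2 le_rfl) (Set.mem_Ici.2 (hpos j).le) (hpos j)
    · rw [hβq j, hψinv (x₀ j) (hpos j).le]
    · calc ∑ j, l j * ψ (β * q j) = ∑ j, l j * x₀ j :=
          Finset.sum_congr rfl (fun j _ => by rw [hβq j, hψinv _ (hpos j).le])
        _ = b := hx₀b
  · intro β hβ hβlt hsum x₀ hx₀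
    have hqpos : ∀ j, 0 < β * q j := fun j =>
      mul_pos hβ (by rw [hq]; exact div_pos (hl j) (hc j))
    have hd : ∀ j, deriv φ (x₀ j) = β * q j := by
      intro j
      rw [hx₀ j]
      exact (hψ _ (hqpos j) (hβlt j).le).2
    have hx0nn : ∀ j, 0 ≤ x₀ j := fun j => by
      rw [hx₀ j]; exact (hψ _ (hqpos j) (hβlt j).le).1
    have hx0pos : ∀ j, 0 < x₀ j := by
      intro j
      rcases (hx0nn j).lt_or_eq with h | h
      · exact h
      · exfalso
        have h2 := hd j
        rw [← h] at h2
        have := hβlt j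
        linarith
    have hx₀b : ∑ j, l j * x₀ j = b := by
      rw [← hsum]
      exact Finset.sum_congr rfl (fun j _ => by rw [hx₀ j])
    have hx₀P : x₀ ∈ P := by rw [hP]; exact hx₀b
    refine ⟨hx₀P, ?_⟩
    rcases Nat.eq_zero_or_pos n with hn | hn
    · subst hn
      refine ⟨1, one_pos, fun x _ _ => ?_⟩
      rw [hf, hf]
      simp
    haveI : Nonempty (Fin n) := ⟨⟨0, hn⟩⟩
    set ε := Finset.univ.inf' Finset.univ_nonempty (fun j => x₀ j) with hε
    have hεpos : 0 < ε := (Finset.lt_inf'_iff _).2 (fun j _ => hx0pos j)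
    refine ⟨ε, hεpos, fun x hx hxn => ?_⟩
    have hxnn : ∀ j, 0 ≤ x j := by
      intro j
      have h1 : |x j - x₀ j| ≤ ‖x - x₀‖ := by
        have h := coord_le_norm (x - x₀) j
        rwa [PiLp.sub_apply] at h
      have h2 : ε ≤ x₀ j := Finset.inf'_le _ (Finset.mem_univ j)
      have h3 := (abs_lt.1 (lt_of_le_of_lt h1 hxn)).1
      linarith
    have hxb : ∑ j, l j * x j = b := by rw [hP] at hx; exact hx
    rw [hf, hf]
    have hterm : ∀ j ∈ Finset.univ, c j * φ (x j)
        ≤ c j * φ (x₀ j) + β * l j * (x j - x₀ j) := by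
      intro j _
      have ht := tangent_le hdiff hanti (hx0nn j) (hxnn j)
      have hde : c j * deriv φ (x₀ j) = β * l j := by
        rw [hd j, hq]
        field_simp [hc0 j]
      calc c j * φ (x j) ≤ c j * (φ (x₀ j) + deriv φ (x₀ j) * (x j - x₀ j)) :=
            mul_le_mul_of_nonneg_left ht (hc j).le
        _ = c j * φ (x₀ j) + (c j * deriv φ (x₀ j)) * (x j - x₀ j) := by ring
        _ = c j * φ (x₀ j) + β * l j * (x j - x₀ j) := by rw [hde]
    calc ∑ j, c j * φ (x j)
        ≤ ∑ j, (c j * φ (x₀ j) + β * l j * (x j - x₀ j)) := Finset.sum_le_sum hterm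
      _ = ∑ j, c j * φ (x₀ j) + β * ((∑ j, l j * x j) - ∑ j, l j * x₀ j) := by
          rw [Finset.sum_add_distrib, mul_sub, Finset.mul_sum, Finset.mul_sum,
            ← Finset.sum_sub_distrib]
          congr 1
          exact Finset.sum_congr rfl (fun j _ => by ring)
      _ = ∑ j, c j * φ (x₀ j) := by rw [hxb, hx₀b]; ring
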